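/- For every natural number x ≥ 1, the polynomial (x+1)a^{x+3} − (x+4)a^{x+2} + (x+4)a − (x+1) in the real variable a has exactly one zero in the open interval (0, 1). -/

import Mathlib

open Finset Set

noncomputable def gibGeom (x : ℕ) (a : ℝ) : ℝ :=
  ((x : ℝ) + 1) * (1 + a ^ (x + 2)) - 3 * ∑ k ∈ range (x + 1), a ^ (k + 1)

lemma gibGeom_hasDerivAt (x : ℕ) (a : ℝ) :
    HasDerivAt (gibGeom x)
      (((x : ℝ) + 1) * (((x : ℝ) + 2) * a ^ (x + 1))
        - 3 * ∑ k ∈ range (x + 1), ((k : ℝ) + 1) * a ^ k) a := by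
  have h1 : HasDerivAt (fun a : ℝ => 1 + a ^ (x + 2)) (((x : ℝ) + 2) * a ^ (x + 1)) a := by
    have := (hasDerivAt_pow (x + 2) a).const_add 1
    simpa using this
  have hsum : HasDerivAt (fun a : ℝ => ∑ k ∈ range (x + 1), a ^ (k + 1))
      (∑ k ∈ range (x + 1), ((k : ℝ) + 1) * a ^ k) a := by
    apply HasDerivAt.fun_sum
    intro k _
    simpa using hasDerivAt_pow (k + 1) a
  exact (h1.const_mul _).sub (hsum.const_mul 3)

lemma sum_cast_succ (n : ℕ) : ∑ k ∈ range n, ((k : ℝ) + 1) = (n : ℝ) * ((n : ℝ) + 1) / 2 := by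
  induction n with
  | zero => simp
  | succ n ih => rw [Finset.sum_range_succ, ih]; push_cast; ring

lemma gibGeom_deriv_neg (x : ℕ) {a : ℝ} (ha : a ∈ Set.Ioo (0 : ℝ) 1) :
    deriv (gibGeom x) a < 0 := by
  obtain ⟨h0, h1⟩ := ha
  rw [(gibGeom_hasDerivAt x a).deriv]
  have hb : ∀ k ∈ range (x + 1), ((k : ℝ) + 1) * a ^ x ≤ ((k : ℝ) + 1) * a ^ k := by
    intro k hk
    have hkx : k ≤ x := Nat.lt_succ_iff.mp (Finset.mem_range.mp hk)
    have := pow_le_pow_of_le_one h0.le h1.le hkx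
    nlinarith [this, Nat.cast_nonneg (α := ℝ) k]
  have hS : ((x : ℝ) + 1) * ((x : ℝ) + 2) / 2 * a ^ x
      ≤ ∑ k ∈ range (x + 1), ((k : ℝ) + 1) * a ^ k := by
    calc ((x : ℝ) + 1) * ((x : ℝ) + 2) / 2 * a ^ x
        = ∑ k ∈ range (x + 1), ((k : ℝ) + 1) * a ^ x := by
          rw [← Finset.sum_mul, sum_cast_succ]; push_cast; ring
      _ ≤ _ := Finset.sum_le_sum hb
  have hxpos : (0 : ℝ) < a ^ x := pow_pos h0 x
  have hx1 : a ^ (x + 1) = a ^ x * a := pow_succ a x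
  have hc : (0 : ℝ) < ((x : ℝ) + 1) * ((x : ℝ) + 2) := by positivity
  have key : ((x : ℝ) + 1) * (((x : ℝ) + 2) * a ^ (x + 1))
      < 3 * (((x : ℝ) + 1) * ((x : ℝ) + 2) / 2 * a ^ x) := by
    rw [hx1]
    nlinarith [mul_pos hc hxpos, h1]
  linarith [key, hS]

lemma gibGeom_factor (x : ℕ) (a : ℝ) :
    ((x : ℝ) + 1) * a ^ (x + 3) - ((x : ℝ) + 4) * a ^ (x + 2)
      + ((x : ℝ) + 4) * a - ((x : ℝ) + 1) = (a - 1) * gibGeom x a := by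
  have hsum : (∑ k ∈ range (x + 1), a ^ (k + 1)) = (∑ k ∈ range (x + 1), a ^ k) * a := by
    rw [Finset.sum_mul]
    exact Finset.sum_congr rfl fun k _ => (pow_succ a k).symm
  have hS : (∑ k ∈ range (x + 1), a ^ k) * (a - 1) = a ^ (x + 1) - 1 := geom_sum_mul a (x + 1)
  rw [gibGeom, hsum]
  linear_combination 3 * a * hS

theorem geometric_iterative_bayes_unique_zero (x : ℕ) (hx : 1 ≤ x) :
    ∃! a : ℝ, a ∈ Set.Ioo (0 : ℝ) 1 ∧
      ((x : ℝ) + 1) * a ^ (x + 3) - ((x : ℝ) + 4) * a ^ (x + 2)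
        + ((x : ℝ) + 4) * a - ((x : ℝ) + 1) = 0 := by
  have hcont : Continuous (gibGeom x) := by
    rw [continuous_iff_continuousAt]
    exact fun a => (gibGeom_hasDerivAt x a).differentiableAt.continuousAt
  have hanti : StrictAntiOn (gibGeom x) (Set.Icc 0 1) := by
    apply strictAntiOn_of_deriv_neg (convex_Icc 0 1) hcont.continuousOn
    intro a ha
    rw [interior_Icc] at ha
    exact gibGeom_deriv_neg x ha
  have hg0 : gibGeom x 0 = (x : ℝ) + 1 := by
    simp [gibGeom]
  have hg1 : gibGeom x 1 = -((x : ℝ) + 1) := by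
    simp [gibGeom]
    ring
  have hmem : (0 : ℝ) ∈ Set.Ioo (gibGeom x 1) (gibGeom x 0) := by
    rw [hg0, hg1]
    have : (0 : ℝ) < (x : ℝ) + 1 := by positivity
    constructor <;> linarith
  have hiv := intermediate_value_Ioo' (by norm_num : (0:ℝ) ≤ 1) hcont.continuousOn hmem
  obtain ⟨a, ha, hga⟩ := hiv
  refine ⟨a, ⟨ha, ?_⟩, ?_⟩
  · rw [gibGeom_factor, hga, mul_zero]
  · rintro b ⟨hb, hfb⟩
    rw [gibGeom_factor] at hfb
    have hb1 : b - 1 ≠ 0 := by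
      have := hb.2; intro h; nlinarith
    have hgb : gibGeom x b = 0 := by
      rcases mul_eq_zero.mp hfb with h | h
      · exact absurd h hb1
      · exact h
    have : gibGeom x b = gibGeom x a := by rw [hgb, hga]
    exact hanti.injOn (Set.mem_Icc_of_Ioo hb) (Set.mem_Icc_of_Ioo ha) this
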